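/- Let F : A ⥤ B be exact between triangulated categories with right adjoint R, and cotwist C with triangle C → id_A →η_R RF →γ_R C[1], twist T with triangle FR →ε_R id_B →α_R T →β_R FR[1]. Then there is a natural isomorphism TF[-1] ≅ FC[1] given by the composite TF[-1] →β_R F[-1] FRF →Fγ_R FC[1]. (This follows from the triangular identity εF ∘ Fη = id_F splitting FRF and the octahedral axiom.) -/

import Mathlib

open CategoryTheory Category Limits Pretriangulated

/-- Auxiliary lemma: if `f : X ⟶ Y` admits a retraction `g` (`f ≫ g = 𝟙 X`),
`X →f Y →u Kf →w X[1]` and `Y →g X →α Kg →β Y[1]` are distinguished triangles,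
then `β ≫ u⟦1⟧' : Kg ⟶ Kf⟦1⟧` is an isomorphism. -/
lemma aux_isIso_of_split {D : Type*} [Category D] [HasShift D ℤ] [Preadditive D]
    [HasZeroObject D] [∀ n : ℤ, (shiftFunctor D n).Additive] [Pretriangulated D]
    {X Y Kf Kg : D} (f : X ⟶ Y) (g : Y ⟶ X) (hfg : f ≫ g = 𝟙 X)
    (u : Y ⟶ Kf) (w : Kf ⟶ X⟦(1 : ℤ)⟧)
    (hTf : Triangle.mk f u w ∈ distTriang D)
    (α : X ⟶ Kg) (β : Kg ⟶ Y⟦(1 : ℤ)⟧)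
    (hTg : Triangle.mk g α β ∈ distTriang D) :
    IsIso (β ≫ u⟦(1 : ℤ)⟧') := by
  have hfu : f ≫ u = 0 := comp_distTriang_mor_zero₁₂ _ hTf
  have hga : g ≫ α = 0 := comp_distTriang_mor_zero₁₂ _ hTg
  have hβg : β ≫ g⟦(1 : ℤ)⟧' = 0 := comp_distTriang_mor_zero₃₁ _ hTg
  have hw : w = 0 := by
    have h1 : w ≫ f⟦(1 : ℤ)⟧' = 0 := comp_distTriang_mor_zero₃₁ _ hTf
    calc w = w ≫ 𝟙 (X⟦(1 : ℤ)⟧) := (comp_id _).symm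
      _ = w ≫ (f ≫ g)⟦(1 : ℤ)⟧' := by rw [hfg, CategoryTheory.Functor.map_id]
      _ = (w ≫ f⟦(1 : ℤ)⟧') ≫ g⟦(1 : ℤ)⟧' := by rw [Functor.map_comp, assoc]
      _ = 0 := by rw [h1, zero_comp]
  apply isIso_of_yoneda_map_bijective
  intro W
  have key : ∀ φ : W ⟶ Kg, φ ≫ β ≫ u⟦(1 : ℤ)⟧' = 0 → φ = 0 := by
    intro φ hφ
    obtain ⟨θ, hθ'⟩ : ∃ θ : W ⟶ X⟦(1 : ℤ)⟧, φ ≫ β = θ ≫ (-(f⟦(1 : ℤ)⟧')) :=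
      Triangle.coyoneda_exact₁ _ (rot_of_distTriang _ hTf) (φ ≫ β)
        (by exact (assoc _ _ _).trans hφ)
    have hθ0 : θ = 0 := by
      have h2 := congrArg (fun x => x ≫ g⟦(1 : ℤ)⟧') hθ'
      rw [assoc, hβg, comp_zero, Preadditive.comp_neg, Preadditive.neg_comp, assoc,
        ← Functor.map_comp, hfg, CategoryTheory.Functor.map_id, comp_id] at h2
      exact neg_eq_zero.mp h2.symm
    have hφβ : φ ≫ β = 0 := by rw [hθ', hθ0, zero_comp]
    obtain ⟨χ, hχ⟩ : ∃ χ : W ⟶ X, φ = χ ≫ α :=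
      Triangle.coyoneda_exact₃ _ hTg φ hφβ
    rw [hχ]
    calc χ ≫ α = χ ≫ (f ≫ g) ≫ α := by rw [hfg, id_comp]
      _ = (χ ≫ f) ≫ g ≫ α := by simp only [assoc]
      _ = 0 := by rw [hga, comp_zero]
  constructor
  · intro φ₁ φ₂ h
    dsimp only at h
    have h0 := key (φ₁ - φ₂) (by rw [Preadditive.sub_comp, h, sub_self])
    rwa [sub_eq_zero] at h0
  · intro χ
    have hχw : χ ≫ ((Triangle.mk f u w).rotate.rotate.mor₁)⟦(1 : ℤ)⟧' = 0 := by
      show χ ≫ w⟦(1 : ℤ)⟧' = 0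
      rw [hw, CategoryTheory.Functor.map_zero, comp_zero]
    obtain ⟨ψ, hψ'⟩ : ∃ ψ : W ⟶ Y⟦(1 : ℤ)⟧, χ = ψ ≫ (-(u⟦(1 : ℤ)⟧')) :=
      Triangle.coyoneda_exact₁ _
        (rot_of_distTriang _ (rot_of_distTriang _ hTf)) χ hχw
    obtain ⟨ψ₀, hψ₀⟩ : ∃ ψ₀ : W ⟶ Y⟦(1 : ℤ)⟧, χ = ψ₀ ≫ u⟦(1 : ℤ)⟧' :=
      ⟨-ψ, by rw [hψ', Preadditive.comp_neg, Preadditive.neg_comp]⟩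
    obtain ⟨Ψ, hΨlift, hΨker⟩ : ∃ Ψ : W ⟶ Y⟦(1 : ℤ)⟧,
        Ψ ≫ u⟦(1 : ℤ)⟧' = χ ∧ Ψ ≫ g⟦(1 : ℤ)⟧' = 0 := by
      refine ⟨ψ₀ - ψ₀ ≫ g⟦(1 : ℤ)⟧' ≫ f⟦(1 : ℤ)⟧', ?_, ?_⟩
      · rw [Preadditive.sub_comp, assoc, assoc, ← Functor.map_comp, hfu,
          CategoryTheory.Functor.map_zero, comp_zero, comp_zero, sub_zero]
        exact hψ₀.symm
      · rw [Preadditive.sub_comp, assoc, assoc, ← Functor.map_comp, hfg,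
          CategoryTheory.Functor.map_id, comp_id, sub_self]
    obtain ⟨φ, hφ'⟩ : ∃ φ : W ⟶ Kg, Ψ = φ ≫ β :=
      Triangle.coyoneda_exact₁ _ hTg Ψ hΨker
    exact ⟨φ, by dsimp only; rw [← assoc, ← hφ', hΨlift]⟩

/-- Lemma 1.4: let `F : A ⥤ B` be exact with right adjoint `R`, cotwist `C` (triangle
`C → 𝟭 →η_R RF →γ_R C[1]`) and twist `T` (triangle `FR →ε_R 𝟭 →α_R T →β_R FR[1]`).
Then the composite `TF[-1] →β_R F[-1] FRF →Fγ_R FC[1]` is a natural isomorphism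
`TF[-1] ≅ FC[1]` (stated here after shifting once: for every object `a` the composite
`TF(a) → (FRF(a))[1] → (FC(a)[1])[1]` is an isomorphism). -/
theorem TF_iso_FC {A B : Type*} [Category A] [Category B]
    [HasShift A ℤ] [HasShift B ℤ] [Preadditive A] [Preadditive B]
    [HasZeroObject A] [HasZeroObject B]
    [∀ n : ℤ, (shiftFunctor A n).Additive] [∀ n : ℤ, (shiftFunctor B n).Additive]
    [Pretriangulated A] [Pretriangulated B]
    (F : A ⥤ B) [F.CommShift ℤ] [F.IsTriangulated]
    (R : B ⥤ A) [R.CommShift ℤ] [R.IsTriangulated]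
    (adjR : F ⊣ R)
    (C : A ⥤ A) (δR : C ⟶ 𝟭 A) (γR : F ⋙ R ⟶ C ⋙ shiftFunctor A (1 : ℤ))
    (hC : ∀ a : A, Triangle.mk (δR.app a) (adjR.unit.app a) (γR.app a) ∈ distTriang A)
    (T : B ⥤ B) (αR : 𝟭 B ⟶ T) (βR : T ⟶ (R ⋙ F) ⋙ shiftFunctor B (1 : ℤ))
    (hT : ∀ b : B, Triangle.mk (adjR.counit.app b) (αR.app b) (βR.app b) ∈ distTriang B) :
    ∀ a : A, IsIso (βR.app (F.obj a) ≫
      ((F.map (γR.app a) ≫ (F.commShiftIso (1 : ℤ)).hom.app (C.obj a))⟦(1 : ℤ)⟧')) := by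
  intro a
  exact aux_isIso_of_split
    (F.map (adjR.unit.app a)) (adjR.counit.app (F.obj a))
    (adjR.left_triangle_components a)
    (F.map (γR.app a) ≫ (F.commShiftIso (1 : ℤ)).hom.app (C.obj a))
    (-((F.map (δR.app a))⟦(1 : ℤ)⟧'))
    (rot_of_distTriang _ (F.map_distinguished _ (hC a)))
    (αR.app (F.obj a)) (βR.app (F.obj a)) (hT (F.obj a))
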